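/- The set MAX of ultrafilters on ℤ that contain nℤ for every positive integer n is a two-sided ideal for the ultrafilter product: if w ∈ MAX and u is any ultrafilter on ℤ, then both u · w and w · u belong to MAX. -/
import Mathlib


/-- The ultrafilter product: `A ∈ uprod u v` iff `{x : {y : x * y ∈ A} ∈ v} ∈ u`. -/
def uprod (u v : Ultrafilter ℤ) : Ultrafilter ℤ :=
  u.bind fun x => v.map fun y => x * y

/-- `MAX` is the set of ultrafilters on `ℤ` divisible by every positive integer. -/
def MAX : Set (Ultrafilter ℤ) :=
  {u | ∀ n : ℕ, 1 ≤ n → {x : ℤ | (n : ℤ) ∣ x} ∈ u}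

theorem stmt_6 (w u : Ultrafilter ℤ) (hw : w ∈ MAX) :
    uprod u w ∈ MAX ∧ uprod w u ∈ MAX := by
  constructor
  · intro n hn
    show {x : ℤ | {y : ℤ | (n : ℤ) ∣ x * y} ∈ w} ∈ u
    have : ∀ x : ℤ, {y : ℤ | (n : ℤ) ∣ x * y} ∈ w := fun x =>
      w.toFilter.mem_of_superset (hw n hn) fun y hy => hy.mul_left x
    exact u.toFilter.mem_of_superset Filter.univ_mem fun x _ => this x
  · intro n hn
    show {x : ℤ | {y : ℤ | (n : ℤ) ∣ x * y} ∈ u} ∈ w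
    exact w.toFilter.mem_of_superset (hw n hn) fun x hx =>
      u.toFilter.mem_of_superset Filter.univ_mem fun y _ => hx.mul_right y
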